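/- Let π=(B_1,…,B_k) be any ordered multiset partition (k≥1). Then minimaj(B_1,…,B_k) = minimaj(B_1,…,B_{k−1},{min(B_k)}); that is, the minimaj statistic depends on the last block only through its minimum element. -/

import Mathlib

open scoped BigOperators

namespace omp

/-- The multiset `A(β) ∪ {0^r}`: the letter `i` (for `1 ≤ i ≤ m`) with multiplicity `β_i`,
together with `r` copies of the letter `0`. -/
def content (r : ℕ) (β : List ℕ) : Multiset ℕ :=
  Multiset.replicate r 0 +
    ∑ i ∈ Finset.range β.length, Multiset.replicate (β.getD i 0) (i + 1)

/-- `π` is an ordered multiset partition of `A(β) ∪ {0^r}` into `k` (nonempty) blocks,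
with `0` allowed anywhere: the set `OP^all_{r;β,k}`. -/
def IsOPall (r : ℕ) (β : List ℕ) (k : ℕ) (π : List (Finset ℕ)) : Prop :=
  π.length = k ∧ (∀ B ∈ π, B.Nonempty) ∧ (π.map Finset.val).sum = content r β

/-- Additionally, the last block does not contain `0`: the set `OP_{r;β,k}`. -/
def IsOP (r : ℕ) (β : List ℕ) (k : ℕ) (π : List (Finset ℕ)) : Prop :=
  IsOPall r β k π ∧ 0 ∉ π.getLastD ∅

/-- Ordered multiset partitions of `A(β) ∪ {0^r}` with shape `α`: `OP^all_{r;β,α}`. -/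
def IsOPallSh (r : ℕ) (β α : List ℕ) (π : List (Finset ℕ)) : Prop :=
  (∀ B ∈ π, B.Nonempty) ∧ (π.map Finset.val).sum = content r β ∧
    π.map Finset.card = α

/-- Shape `α` and last block avoiding `0`: `OP_{r;β,α}`. -/
def IsOPSh (r : ℕ) (β α : List ℕ) (π : List (Finset ℕ)) : Prop :=
  IsOPallSh r β α π ∧ 0 ∉ π.getLastD ∅

/-- The `i`-th block (0-indexed). -/
def blk (π : List (Finset ℕ)) (i : ℕ) : Finset ℕ := π.getD i ∅

open Classical in
/-- `inv`: pairs of a letter `a` in block `B_i` and the minimum `b` of a later block `B_j`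
with `a > b`. -/
noncomputable def inv (π : List (Finset ℕ)) : ℕ :=
  ∑ i ∈ Finset.range π.length, ∑ j ∈ Finset.range π.length,
    if i < j then
      ((blk π i).filter (fun (a : ℕ) => (blk π j).min < (a : WithBot ℕ))).card
    else 0

/-- The word `σ(π)`: each block written in decreasing order, blocks concatenated. -/
def sigmaWord (π : List (Finset ℕ)) : List ℕ :=
  (π.map (fun B => (B.sort (· ≤ ·)).reverse)).flatten

/-- The word `ind(π) = 0^{|B_1|} 1^{|B_2|} ⋯ (k-1)^{|B_k|}`. -/
def indWord (π : List (Finset ℕ)) : List ℕ :=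
  ((π.zipIdx.map Prod.swap).map (fun p => List.replicate p.2.card p.1)).flatten

/-- The major index of a word (positions are 1-based). -/
def majW (w : List ℕ) : ℕ :=
  ∑ i ∈ Finset.range (w.length - 1),
    if w.getD (i + 1) 0 < w.getD i 0 then i + 1 else 0

/-- `maj(π)`: the sum of `ind(π)_{i+1}` over descents `σ_i > σ_{i+1}` of `σ(π)`. -/
def maj (π : List (Finset ℕ)) : ℕ :=
  ∑ i ∈ Finset.range ((sigmaWord π).length - 1),
    if (sigmaWord π).getD (i + 1) 0 < (sigmaWord π).getD i 0 then
      (indWord π).getD (i + 1) 0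
    else 0

/-- `dinv(π)`: primary and secondary diagonal inversions, where `B_i^h` is the `h`-th smallest
element of block `B_i` (here `h` is 0-indexed). -/
def dinv (π : List (Finset ℕ)) : ℕ :=
  ∑ i ∈ Finset.range π.length, ∑ j ∈ Finset.range π.length,
    if i < j then
      ((Finset.range (blk π i).card).filter (fun h =>
          h < (blk π j).card ∧
            ((blk π j).sort (· ≤ ·)).getD h 0 < ((blk π i).sort (· ≤ ·)).getD h 0)).card +
      ((Finset.range (blk π i).card).filter (fun h =>
          h + 1 < (blk π j).card ∧
            ((blk π j).sort (· ≤ ·)).getD (h + 1) 0 < ((blk π i).sort (· ≤ ·)).getD h 0)).card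
    else 0

/-- `miniword(π)`, built from right to left: the last block in increasing order; inductively,
if the word built so far begins with `s`, block `B_i` contributes its elements greater than `s`
in increasing order followed by its elements at most `s` in increasing order. -/
def miniword : List (Finset ℕ) → List ℕ
  | [] => []
  | B :: rest =>
    match miniword rest with
    | [] => B.sort (· ≤ ·)
    | s :: w =>
        ((B.filter (fun x => s < x)).sort (· ≤ ·) ++
          (B.filter (fun x => x ≤ s)).sort (· ≤ ·)) ++ s :: w

/-- `minimaj(π) = maj(miniword(π))`. -/
def minimaj (π : List (Finset ℕ)) : ℕ := majW (miniword π)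

/-- `D^{stat}_{r;β,k}(q) = Σ_{π ∈ OP_{r;β,k}} q^{stat(π)}` (the set is finite, so the
finite-support sum below is the intended polynomial). -/
noncomputable def D (r : ℕ) (β : List ℕ) (k : ℕ)
    (stat : List (Finset ℕ) → ℕ) : Polynomial ℕ :=
  ∑ᶠ π ∈ {π | IsOP r β k π}, Polynomial.X ^ stat π

/-- `D^{stat+}_{r;β,k}(q) = Σ_{π ∈ OP^all_{r;β,k}} q^{stat(π)}`. -/
noncomputable def Dall (r : ℕ) (β : List ℕ) (k : ℕ)
    (stat : List (Finset ℕ) → ℕ) : Polynomial ℕ :=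
  ∑ᶠ π ∈ {π | IsOPall r β k π}, Polynomial.X ^ stat π

/-- `D^{stat}_{r;β,α}(q)`, the shape-refined generating function. -/
noncomputable def DSh (r : ℕ) (β α : List ℕ)
    (stat : List (Finset ℕ) → ℕ) : Polynomial ℕ :=
  ∑ᶠ π ∈ {π | IsOPSh r β α π}, Polynomial.X ^ stat π

/-- `D^{stat+}_{r;β,α}(q)`, the shape-refined generating function with `0` allowed
in the last block. -/
noncomputable def DallSh (r : ℕ) (β α : List ℕ)
    (stat : List (Finset ℕ) → ℕ) : Polynomial ℕ :=
  ∑ᶠ π ∈ {π | IsOPallSh r β α π}, Polynomial.X ^ stat π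

end omp




namespace MinimajAux

open omp

/-- getD agreement up to and including position `u.length`. -/
lemma getD_agree (u : List ℕ) (m : ℕ) (v : List ℕ) (j : ℕ) (hj : j ≤ u.length) :
    (u ++ m :: v).getD j 0 = (u ++ [m]).getD j 0 := by
  rcases lt_or_eq_of_le hj with h | h
  · rw [List.getD_append _ _ _ _ h, List.getD_append _ _ _ _ h]
  · subst h
    rw [List.getD_append_right _ _ _ _ le_rfl, List.getD_append_right _ _ _ _ le_rfl]
    simp

lemma majW_chain (u : List ℕ) (m : ℕ) (v : List ℕ)
    (hs : List.Pairwise (· ≤ ·) (m :: v)) :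
    majW (u ++ m :: v) = majW (u ++ [m]) := by
  unfold majW
  have hlen1 : (u ++ m :: v).length - 1 = u.length + v.length := by
    simp
  have hlen2 : (u ++ [m]).length - 1 = u.length := by simp
  rw [hlen1, hlen2]
  rw [← Finset.sum_subset (Finset.range_subset_range.2 (Nat.le_add_right _ _))]
  · apply Finset.sum_congr rfl
    intro i hi
    have hi' : i < u.length := Finset.mem_range.1 hi
    rw [getD_agree u m v i hi'.le, getD_agree u m v (i+1) hi']
  · intro i hi hni
    have h1 : u.length ≤ i := by
      simp only [Finset.mem_range, not_lt] at hni; exact hni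
    have h2 : i < u.length + v.length := Finset.mem_range.1 hi
    have e1 : (u ++ m :: v).getD i 0 = (m :: v).getD (i - u.length) 0 :=
      List.getD_append_right _ _ _ _ h1
    have e2 : (u ++ m :: v).getD (i+1) 0 = (m :: v).getD (i + 1 - u.length) 0 :=
      List.getD_append_right _ _ _ _ (le_trans h1 (Nat.le_succ i))
    have hle : (m :: v).getD (i - u.length) 0 ≤ (m :: v).getD (i + 1 - u.length) 0 := by
      have h3 : i + 1 - u.length < (m :: v).length := by simp; omega
      have h4 : i - u.length < i + 1 - u.length := by omega
      rw [List.getD_eq_getElem _ _ (lt_trans h4 h3), List.getD_eq_getElem _ _ h3]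
      exact List.Pairwise.rel_get_of_lt hs (by exact_mod_cast h4)
    rw [e1, e2, if_neg (not_lt.2 hle)]

/-- One step of `miniword` when the tail word is nonempty. -/
lemma miniword_cons (C : Finset ℕ) (r1 : List (Finset ℕ)) (s : ℕ) (w1 : List ℕ)
    (h1 : miniword r1 = s :: w1) :
    miniword (C :: r1) =
      ((C.filter (fun x => s < x)).sort (· ≤ ·) ++
        (C.filter (fun x => x ≤ s)).sort (· ≤ ·)) ++ s :: w1 := by
  rw [miniword, h1]

lemma miniword_key (B : Finset ℕ) (hB : B.Nonempty) (bs : List (Finset ℕ)) :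
    ∃ u : List ℕ, miniword (bs ++ [B]) = u ++ B.sort (· ≤ ·) ∧
      miniword (bs ++ [{B.min' hB}]) = u ++ [B.min' hB] := by
  set m := B.min' hB with hm
  have h0 : 0 < (B.sort (· ≤ ·)).length := by
    rw [Finset.length_sort]; exact hB.card_pos
  obtain ⟨a, L', hE⟩ := List.exists_cons_of_ne_nil (List.length_pos_iff.mp h0)
  have ha : a = m := by
    have h := Finset.sorted_zero_eq_min' (h := h0) (s := B)
    rw [hm, ← h, List.getElem_of_eq hE h0]; rfl
  subst ha
  induction bs with
  | nil =>
      refine ⟨[], ?_, ?_⟩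
      · simp [miniword]
      · simp [miniword, Finset.sort_singleton]
  | cons C bs' ih =>
      obtain ⟨u, h1, h2⟩ := ih
      cases u with
      | nil =>
          simp only [List.nil_append] at h1 h2
          rw [hE] at h1
          refine ⟨((C.filter (fun x => m < x)).sort (· ≤ ·) ++
            (C.filter (fun x => x ≤ m)).sort (· ≤ ·)), ?_, ?_⟩
          · rw [List.cons_append, miniword_cons C _ m L' h1, hE]
          · rw [List.cons_append, miniword_cons C _ m [] h2]
      | cons x u' =>
          have h1' : miniword (bs' ++ [B]) = x :: (u' ++ B.sort (· ≤ ·)) := by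
            simpa using h1
          have h2' : miniword (bs' ++ [{m}]) = x :: (u' ++ [m]) := by
            simpa using h2
          refine ⟨((C.filter (fun y => x < y)).sort (· ≤ ·) ++
            (C.filter (fun y => y ≤ x)).sort (· ≤ ·)) ++ (x :: u'), ?_, ?_⟩
          · rw [List.cons_append, miniword_cons C _ x _ h1']
            simp
          · rw [List.cons_append, miniword_cons C _ x _ h2']
            simp

end MinimajAux

/-- `minimaj` depends on the last block only through its minimum:
`minimaj(B_1,…,B_k) = minimaj(B_1,…,B_{k−1},{min(B_k)})`. -/
theorem minimaj_last_block_min (bs : List (Finset ℕ)) (B : Finset ℕ) (hB : B.Nonempty)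
    (hbs : ∀ C ∈ bs, C.Nonempty) :
    omp.minimaj (bs ++ [B]) = omp.minimaj (bs ++ [{B.min' hB}]) := by
  obtain ⟨u, h1, h2⟩ := MinimajAux.miniword_key B hB bs
  have h0 : 0 < (B.sort (· ≤ ·)).length := by
    rw [Finset.length_sort]; exact hB.card_pos
  obtain ⟨a, L', hE⟩ := List.exists_cons_of_ne_nil (List.length_pos_iff.mp h0)
  have ha : a = B.min' hB := by
    have h := Finset.sorted_zero_eq_min' (h := h0) (s := B)
    rw [← h, List.getElem_of_eq hE h0]; rfl
  subst ha
  have hsort : List.Pairwise (· ≤ ·) (B.min' hB :: L') := hE ▸ B.pairwise_sort (· ≤ ·)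
  unfold omp.minimaj
  rw [h1, h2, hE]
  exact MinimajAux.majW_chain u (B.min' hB) L' hsort
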